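/- Let (f,g) ∈ 𝒞 (i.e., f,g : [0,1] → [0,1] continuous, f(0)=0, g(1)=1, 0<f(x)<x for x≠0, x<g(x)<1 for x≠1, both orientation-preserving homeomorphisms onto their images). Then the closure of the forward orbit O₊(0) is a minimal set for the semigroup action: for every y in the closure of O₊(0), the closure of O₊(y) equals the closure of O₊(0). -/
import Mathlib


def unitI : Set ℝ := Set.Icc 0 1

def memC (f g : ℝ → ℝ) : Prop :=
  ContinuousOn f unitI ∧ ContinuousOn g unitI ∧
  Set.MapsTo f unitI unitI ∧ Set.MapsTo g unitI unitI ∧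
  f 0 = 0 ∧ g 1 = 1 ∧
  (∀ x ∈ unitI, x ≠ 0 → 0 < f x ∧ f x < x) ∧
  (∀ x ∈ unitI, x ≠ 1 → x < g x ∧ g x < 1) ∧
  StrictMonoOn f unitI ∧ StrictMonoOn g unitI

def orbit (f g : ℝ → ℝ) (x : ℝ) : Set ℝ :=
  { y | ∃ w : List (ℝ → ℝ), w ≠ [] ∧ (∀ h ∈ w, h = f ∨ h = g) ∧
        y = w.foldl (fun a h => h a) x }

lemma unitI_closed : IsClosed unitI := isClosed_Icc

lemma foldl_mapsTo {f g : ℝ → ℝ} (h : memC f g) :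
    ∀ (w : List (ℝ → ℝ)), (∀ h' ∈ w, h' = f ∨ h' = g) →
      Set.MapsTo (fun x => w.foldl (fun a h => h a) x) unitI unitI := by
  intro w
  induction w with
  | nil => intro _ x hx; simpa using hx
  | cons a t ih =>
    intro hw x hx
    simp only [List.foldl_cons]
    have ha : a = f ∨ a = g := hw a (by simp)
    have hax : a x ∈ unitI := by
      rcases ha with rfl | rfl
      · exact h.2.2.1 hx
      · exact h.2.2.2.1 hx
    exact ih (fun h' hh => hw h' (by simp [hh])) hax

lemma foldl_contOn {f g : ℝ → ℝ} (h : memC f g) :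
    ∀ (w : List (ℝ → ℝ)), (∀ h' ∈ w, h' = f ∨ h' = g) →
      ContinuousOn (fun x => w.foldl (fun a h => h a) x) unitI := by
  intro w
  induction w with
  | nil => intro _; exact continuousOn_id
  | cons a t ih =>
    intro hw
    simp only [List.foldl_cons]
    have ha : a = f ∨ a = g := hw a (by simp)
    have hca : ContinuousOn a unitI := by
      rcases ha with rfl | rfl
      · exact h.1
      · exact h.2.1
    have hma : Set.MapsTo a unitI unitI := by
      rcases ha with rfl | rfl
      · exact h.2.2.1
      · exact h.2.2.2.1
    exact (ih (fun h' hh => hw h' (by simp [hh]))).comp hca hma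

lemma orbit_subset_unitI {f g : ℝ → ℝ} (h : memC f g) {x : ℝ} (hx : x ∈ unitI) :
    orbit f g x ⊆ unitI := by
  rintro p ⟨w, -, hwfg, rfl⟩
  exact foldl_mapsTo h w hwfg hx

lemma closure_orbit_subset_unitI {f g : ℝ → ℝ} (h : memC f g) {x : ℝ} (hx : x ∈ unitI) :
    closure (orbit f g x) ⊆ unitI :=
  closure_minimal (orbit_subset_unitI h hx) unitI_closed

lemma foldl_replicate (f : ℝ → ℝ) : ∀ (n : ℕ) (x : ℝ),
    (List.replicate n f).foldl (fun a h => h a) x = f^[n] x := by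
  intro n
  induction n with
  | zero => intro x; simp
  | succ n ih =>
    intro x
    rw [List.replicate_succ, List.foldl_cons, ih, ← Function.iterate_succ_apply]

lemma iterate_mem_orbit (f g : ℝ → ℝ) (n : ℕ) (y : ℝ) :
    f^[n+1] y ∈ orbit f g y := by
  refine ⟨List.replicate (n+1) f, by simp, ?_, (foldl_replicate f (n+1) y).symm⟩
  intro h' hh'
  left
  exact (List.eq_of_mem_replicate hh')

lemma iterate_mem_unitI {f g : ℝ → ℝ} (h : memC f g) {y : ℝ} (hy : y ∈ unitI) (n : ℕ) :
    f^[n] y ∈ unitI := by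
  induction n with
  | zero => simpa using hy
  | succ n ih => rw [Function.iterate_succ_apply']; exact h.2.2.1 ih

lemma tendsto_iterate_zero {f g : ℝ → ℝ} (h : memC f g) {y : ℝ} (hy : y ∈ unitI) :
    Filter.Tendsto (fun n => f^[n] y) Filter.atTop (nhds 0) := by
  set a : ℕ → ℝ := fun n => f^[n] y with ha
  have hmem : ∀ n, a n ∈ unitI := iterate_mem_unitI h hy
  have hanti : Antitone a := by
    apply antitone_nat_of_succ_le
    intro n
    rcases eq_or_ne (a n) 0 with h0 | h0
    · have : a (n+1) = f (a n) := by rw [ha]; simp [Function.iterate_succ_apply']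
      rw [this, h0, h.2.2.2.2.1, ← h0]
    · have : a (n+1) = f (a n) := by rw [ha]; simp [Function.iterate_succ_apply']
      rw [this]
      exact le_of_lt (h.2.2.2.2.2.2.1 (a n) (hmem n) h0).2
  have hbdd : BddBelow (Set.range a) := ⟨0, by rintro p ⟨n, rfl⟩; exact (hmem n).1⟩
  have htend : Filter.Tendsto a Filter.atTop (nhds (⨅ n, a n)) :=
    tendsto_atTop_ciInf hanti hbdd
  set L := ⨅ n, a n with hL
  have hLmem : L ∈ unitI :=
    unitI_closed.mem_of_tendsto htend (Filter.Eventually.of_forall hmem)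
  have htend' : Filter.Tendsto a Filter.atTop (nhdsWithin L unitI) :=
    tendsto_nhdsWithin_of_tendsto_nhds_of_eventually_within a htend
      (Filter.Eventually.of_forall hmem)
  have hfa : Filter.Tendsto (fun n => f (a n)) Filter.atTop (nhds (f L)) :=
    (h.1 L hLmem).tendsto.comp htend'
  have hfa' : Filter.Tendsto (fun n => f (a n)) Filter.atTop (nhds L) := by
    have : (fun n => f (a n)) = fun n => a (n+1) := by
      funext n; rw [ha]; simp [Function.iterate_succ_apply']
    rw [this]
    exact htend.comp (Filter.tendsto_add_atTop_nat 1)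
  have hfL : f L = L := tendsto_nhds_unique hfa hfa'
  have hL0 : L = 0 := by
    by_contra hne
    exact absurd hfL (ne_of_lt (h.2.2.2.2.2.2.1 L hLmem hne).2)
  rw [← hL0]
  exact htend

lemma zero_mem_closure_orbit {f g : ℝ → ℝ} (h : memC f g) {y : ℝ} (hy : y ∈ unitI) :
    (0 : ℝ) ∈ closure (orbit f g y) := by
  have htend : Filter.Tendsto (fun n => f^[n+1] y) Filter.atTop (nhds 0) :=
    (tendsto_iterate_zero h hy).comp (Filter.tendsto_add_atTop_nat 1)
  exact mem_closure_of_tendsto htend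
    (Filter.Eventually.of_forall fun n => iterate_mem_orbit f g n y)

lemma orbit_subset_closure {f g : ℝ → ℝ} (h : memC f g) {x z : ℝ} (hz : z ∈ unitI)
    (hx : x ∈ closure (orbit f g z)) :
    orbit f g x ⊆ closure (orbit f g z) := by
  rintro p ⟨w, hw, hwfg, rfl⟩
  have hcl : closure (orbit f g z) ⊆ unitI := closure_orbit_subset_unitI h hz
  have hcont : ContinuousOn (fun x => w.foldl (fun a h => h a) x) (closure (orbit f g z)) :=
    (foldl_contOn h w hwfg).mono hcl
  have himg : (fun x => w.foldl (fun a h => h a) x) '' closure (orbit f g z) ⊆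
      closure ((fun x => w.foldl (fun a h => h a) x) '' orbit f g z) :=
    hcont.image_closure
  have hmem : w.foldl (fun a h => h a) x ∈
      (fun x => w.foldl (fun a h => h a) x) '' closure (orbit f g z) := ⟨x, hx, rfl⟩
  have hsub : (fun x => w.foldl (fun a h => h a) x) '' orbit f g z ⊆ orbit f g z := by
    rintro q ⟨r, ⟨w', hw', hwfg', rfl⟩, rfl⟩
    refine ⟨w' ++ w, by simp [hw'], ?_, (List.foldl_append ..).symm⟩
    intro h' hh'
    rcases List.mem_append.mp hh' with h1 | h2
    · exact hwfg' h' h1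
    · exact hwfg h' h2
  exact closure_mono hsub (himg hmem)

theorem closure_orbit_zero_minimal (f g : ℝ → ℝ) (h : memC f g) :
    ∀ y ∈ closure (orbit f g 0), closure (orbit f g y) = closure (orbit f g 0) := by
  intro y hy
  have h0 : (0 : ℝ) ∈ unitI := ⟨le_refl 0, zero_le_one⟩
  have hyI : y ∈ unitI := closure_orbit_subset_unitI h h0 hy
  apply le_antisymm
  · exact closure_minimal (orbit_subset_closure h h0 hy) isClosed_closure
  · have h0cl : (0 : ℝ) ∈ closure (orbit f g y) := zero_mem_closure_orbit h hyI
    exact closure_minimal (orbit_subset_closure h hyI h0cl) isClosed_closure
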